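/- Every instance of the Bakers and Millers Game with restricted baker locations admits a pure Nash equilibrium. -/

import Mathlib

open Finset

/-- Number of agents (bakers or millers) choosing location `ℓ`. -/
def cnt {A L : Type*} [Fintype A] [DecidableEq L] (f : A → L) (ℓ : L) : ℕ :=
  (Finset.univ.filter (fun a => f a = ℓ)).card

/-- Utility of baker `b`: millers at her location over bakers at her location. -/
def bakerUtil {L B M : Type*} [Fintype B] [Fintype M] [DecidableEq L]
    (s : B → L) (t : M → L) (b : B) : ℚ :=
  (cnt t (s b) : ℚ) / (cnt s (s b) : ℚ)

/-- Utility of miller `m`: bakers at her location over millers at her location. -/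
def millerUtil {L B M : Type*} [Fintype B] [Fintype M] [DecidableEq L]
    (s : B → L) (t : M → L) (m : M) : ℚ :=
  (cnt s (t m) : ℚ) / (cnt t (t m) : ℚ)

/-- Pure Nash equilibrium: no baker can strictly improve by a unilateral deviation
to a feasible location, and no miller can strictly improve by a unilateral
deviation to any location. -/
def isNE {L B M : Type*} [Fintype B] [Fintype M] [DecidableEq L] [DecidableEq B] [DecidableEq M]
    (feas : B → Finset L) (s : B → L) (t : M → L) : Prop :=
  (∀ b : B, ∀ ℓ' ∈ feas b,
    bakerUtil (Function.update s b ℓ') t b ≤ bakerUtil s t b) ∧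
  (∀ m : M, ∀ ℓ' : L,
    millerUtil s (Function.update t m ℓ') m ≤ millerUtil s t m)

section PotentialLemmas

lemma cnt_update_key {A L : Type*} [Fintype A] [DecidableEq A] [DecidableEq L]
    (f : A → L) (a : A) (l x : L) :
    cnt (Function.update f a l) x + (if f a = x then 1 else 0)
      = cnt f x + (if l = x then 1 else 0) := by
  unfold cnt
  rw [Finset.card_filter, Finset.card_filter,
      ← Finset.add_sum_erase _ (fun y => if Function.update f a l y = x then 1 else 0)
        (Finset.mem_univ a),
      ← Finset.add_sum_erase _ (fun y => if f y = x then 1 else 0) (Finset.mem_univ a)]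
  have h1 : ∑ y ∈ Finset.univ.erase a, (if Function.update f a l y = x then 1 else 0)
      = ∑ y ∈ Finset.univ.erase a, (if f y = x then 1 else 0) :=
    Finset.sum_congr rfl fun y hy => by
      rw [Function.update_of_ne (Finset.ne_of_mem_erase hy)]
  rw [h1, Function.update_self]
  omega

lemma cnt_update_src {A L : Type*} [Fintype A] [DecidableEq A] [DecidableEq L]
    (f : A → L) (a : A) {l : L} (h : f a ≠ l) :
    cnt (Function.update f a l) (f a) + 1 = cnt f (f a) := by
  have k := cnt_update_key f a l (f a)
  rw [if_pos rfl, if_neg (fun e => h e.symm)] at k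
  omega

lemma cnt_update_tgt {A L : Type*} [Fintype A] [DecidableEq A] [DecidableEq L]
    (f : A → L) (a : A) {l : L} (h : f a ≠ l) :
    cnt (Function.update f a l) l = cnt f l + 1 := by
  have k := cnt_update_key f a l l
  rw [if_neg h, if_pos rfl] at k
  omega

lemma cnt_update_other {A L : Type*} [Fintype A] [DecidableEq A] [DecidableEq L]
    (f : A → L) (a : A) {l x : L} (h1 : x ≠ f a) (h2 : x ≠ l) :
    cnt (Function.update f a l) x = cnt f x := by
  have k := cnt_update_key f a l x
  rw [if_neg (fun e => h1 e.symm), if_neg (fun e => h2 e.symm)] at k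
  omega

lemma cnt_self_pos {A L : Type*} [Fintype A] [DecidableEq A] [DecidableEq L]
    (f : A → L) (a : A) : 0 < cnt f (f a) :=
  Finset.card_pos.2 ⟨a, Finset.mem_filter.2 ⟨Finset.mem_univ a, rfl⟩⟩

/-- The exact ordinal potential: product over locations of `C(β+μ, β)`. -/
def pot {L B M : Type*} [Fintype L] [Fintype B] [Fintype M] [DecidableEq L]
    (s : B → L) (t : M → L) : ℕ :=
  ∏ ℓ, Nat.choose (cnt s ℓ + cnt t ℓ) (cnt s ℓ)

lemma pot_pos {L B M : Type*} [Fintype L] [Fintype B] [Fintype M] [DecidableEq L]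
    (s : B → L) (t : M → L) : 0 < pot s t :=
  Finset.prod_pos fun _ _ => Nat.choose_pos (Nat.le_add_right _ _)

lemma prod_split {L : Type*} [Fintype L] [DecidableEq L] (F G : L → ℕ) {l1 l2 : L}
    (hne : l1 ≠ l2) (hoff : ∀ x, x ≠ l1 → x ≠ l2 → F x = G x) :
    (∏ x, F x) * (G l1 * G l2) = (∏ x, G x) * (F l1 * F l2) := by
  have h2 : l2 ∈ Finset.univ.erase l1 := Finset.mem_erase.2 ⟨Ne.symm hne, Finset.mem_univ l2⟩
  rw [← Finset.mul_prod_erase Finset.univ F (Finset.mem_univ l1),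
      ← Finset.mul_prod_erase _ F h2,
      ← Finset.mul_prod_erase Finset.univ G (Finset.mem_univ l1),
      ← Finset.mul_prod_erase _ G h2]
  have hrest : ∏ x ∈ (Finset.univ.erase l1).erase l2, F x
      = ∏ x ∈ (Finset.univ.erase l1).erase l2, G x :=
    Finset.prod_congr rfl fun y hy =>
      hoff y (Finset.ne_of_mem_erase (Finset.mem_of_mem_erase hy)) (Finset.ne_of_mem_erase hy)
  rw [hrest]; ring

lemma baker_le {L B M : Type*} [Fintype L] [Fintype B] [Fintype M]
    [DecidableEq L] [DecidableEq B] [DecidableEq M]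
    (s : B → L) (t : M → L) (b : B) (l' : L) (h : s b ≠ l')
    (hmax : pot (Function.update s b l') t ≤ pot s t) :
    bakerUtil (Function.update s b l') t b ≤ bakerUtil s t b := by
  set s' := Function.update s b l' with hs'
  set l := s b with hl
  have hcl : cnt s l = cnt s' l + 1 := (cnt_update_src s b h).symm
  have hcl' : cnt s' l' = cnt s l' + 1 := cnt_update_tgt s b h
  set γ := cnt s' l with hγ
  set β' := cnt s l' with hβ'
  set μ := cnt t l with hμ
  set μ' := cnt t l' with hμ'
  set Fn : L → ℕ := fun x => Nat.choose (cnt s x + cnt t x) (cnt s x) with hFn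
  set Gn : L → ℕ := fun x => Nat.choose (cnt s' x + cnt t x) (cnt s' x) with hGn
  have hoff : ∀ x, x ≠ l → x ≠ l' → Fn x = Gn x := by
    intro x h1 h2
    simp only [hFn, hGn, hs', cnt_update_other s b h1 h2]
  have eq1 : (∏ x, Fn x) * (Gn l * Gn l') = (∏ x, Gn x) * (Fn l * Fn l') :=
    prod_split Fn Gn h hoff
  have hFl : Fn l = Nat.choose (γ + μ + 1) (γ + 1) := by
    simp only [hFn, hcl]; congr 1 <;> omega
  have hGl : Gn l = Nat.choose (γ + μ) γ := rfl
  have hFl' : Fn l' = Nat.choose (β' + μ') β' := rfl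
  have hGl' : Gn l' = Nat.choose (β' + μ' + 1) (β' + 1) := by
    simp only [hGn, hcl']
    have : cnt t l' = μ' := rfl
    rw [this]; congr 1 <;> omega
  have idl : (γ + μ + 1) * Gn l = Fn l * (γ + 1) := by
    rw [hFl, hGl]
    have := Nat.add_one_mul_choose_eq (γ + μ) γ
    simpa [Nat.succ_eq_add_one] using this
  have idl' : (β' + μ' + 1) * Fn l' = Gn l' * (β' + 1) := by
    rw [hFl', hGl']
    have := Nat.add_one_mul_choose_eq (β' + μ') β'
    simpa [Nat.succ_eq_add_one] using this
  -- cast to ℚ and combine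
  have e1 : (∏ x, (Fn x : ℚ)) * ((Gn l : ℚ) * (Gn l' : ℚ))
      = (∏ x, (Gn x : ℚ)) * ((Fn l : ℚ) * (Fn l' : ℚ)) := by exact_mod_cast eq1
  have i1 : ((γ : ℚ) + μ + 1) * (Gn l : ℚ) = (Fn l : ℚ) * (γ + 1) := by exact_mod_cast idl
  have i2 : ((β' : ℚ) + μ' + 1) * (Fn l' : ℚ) = (Gn l' : ℚ) * (β' + 1) := by exact_mod_cast idl'
  have hPc : ((pot s t : ℕ) : ℚ) = ∏ x, (Fn x : ℚ) := by
    unfold pot; push_cast; rfl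
  have hQc : ((pot s' t : ℕ) : ℚ) = ∏ x, (Gn x : ℚ) := by
    unfold pot; push_cast; rfl
  have E : (∏ x, (Fn x : ℚ)) * (((γ : ℚ) + 1) * ((β' : ℚ) + μ' + 1)) * ((Fn l : ℚ) * (Gn l' : ℚ))
      = (∏ x, (Gn x : ℚ)) * (((γ : ℚ) + μ + 1) * ((β' : ℚ) + 1)) * ((Fn l : ℚ) * (Gn l' : ℚ)) := by
    linear_combination (((γ : ℚ) + μ + 1) * ((β' : ℚ) + μ' + 1)) * e1
      - ((∏ x, (Fn x : ℚ)) * (Gn l' : ℚ) * ((β' : ℚ) + μ' + 1)) * i1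
      + ((∏ x, (Gn x : ℚ)) * (Fn l : ℚ) * ((γ : ℚ) + μ + 1)) * i2
  have hne0 : ((Fn l : ℚ) * (Gn l' : ℚ)) ≠ 0 := by
    have h1 : 0 < Fn l := by rw [hFl]; exact Nat.choose_pos (by omega)
    have h2 : 0 < Gn l' := by rw [hGl']; exact Nat.choose_pos (by omega)
    positivity
  have key : ((pot s t : ℕ) : ℚ) * (((γ : ℚ) + 1) * ((β' : ℚ) + μ' + 1))
      = ((pot s' t : ℕ) : ℚ) * (((γ : ℚ) + μ + 1) * ((β' : ℚ) + 1)) := by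
    rw [hPc, hQc]
    exact mul_right_cancel₀ hne0 E
  have hle : ((pot s' t : ℕ) : ℚ) ≤ ((pot s t : ℕ) : ℚ) := by exact_mod_cast hmax
  have hposP : (0 : ℚ) < ((pot s t : ℕ) : ℚ) := by exact_mod_cast pot_pos s t
  have hfin : ((γ : ℚ) + 1) * ((β' : ℚ) + μ' + 1) ≤ ((γ : ℚ) + μ + 1) * ((β' : ℚ) + 1) := by
    have step : ((pot s t : ℕ) : ℚ) * (((γ : ℚ) + 1) * ((β' : ℚ) + μ' + 1))
        ≤ ((pot s t : ℕ) : ℚ) * (((γ : ℚ) + μ + 1) * ((β' : ℚ) + 1)) := by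
      rw [key]
      apply mul_le_mul_of_nonneg_right hle
      positivity
    exact le_of_mul_le_mul_left step hposP
  have hmain : (μ' : ℚ) * ((γ : ℚ) + 1) ≤ (μ : ℚ) * ((β' : ℚ) + 1) := by nlinarith [hfin]
  -- conclude the utility inequality
  have hsb' : s' b = l' := Function.update_self b l' s
  unfold bakerUtil
  rw [hsb', ← hl, hcl, hcl', ← hμ, ← hμ']
  rw [div_le_div_iff₀ (by positivity) (by positivity)]
  push_cast
  linarith [hmain]

lemma miller_le {L B M : Type*} [Fintype L] [Fintype B] [Fintype M]
    [DecidableEq L] [DecidableEq B] [DecidableEq M]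
    (s : B → L) (t : M → L) (m : M) (l' : L) (h : t m ≠ l')
    (hmax : pot s (Function.update t m l') ≤ pot s t) :
    millerUtil s (Function.update t m l') m ≤ millerUtil s t m := by
  set t' := Function.update t m l' with ht'
  set l := t m with hl
  have hcl : cnt t l = cnt t' l + 1 := (cnt_update_src t m h).symm
  have hcl' : cnt t' l' = cnt t l' + 1 := cnt_update_tgt t m h
  set δ := cnt t' l with hδ
  set μ' := cnt t l' with hμ'
  set β := cnt s l with hβ
  set β' := cnt s l' with hβ'
  set Fn : L → ℕ := fun x => Nat.choose (cnt s x + cnt t x) (cnt s x) with hFn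
  set Gn : L → ℕ := fun x => Nat.choose (cnt s x + cnt t' x) (cnt s x) with hGn
  have hoff : ∀ x, x ≠ l → x ≠ l' → Fn x = Gn x := by
    intro x h1 h2
    simp only [hFn, hGn, ht', cnt_update_other t m h1 h2]
  have eq1 : (∏ x, Fn x) * (Gn l * Gn l') = (∏ x, Gn x) * (Fn l * Fn l') :=
    prod_split Fn Gn h hoff
  have hFl : Fn l = Nat.choose (β + δ + 1) β := by
    simp only [hFn, hcl, ← hβ]; congr 1 <;> omega
  have hGl : Gn l = Nat.choose (β + δ) β := rfl
  have hFl' : Fn l' = Nat.choose (β' + μ') β' := rfl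
  have hGl' : Gn l' = Nat.choose (β' + μ' + 1) β' := by
    simp only [hGn, hcl', ← hβ']; congr 1 <;> omega
  have idl : Gn l * (β + δ + 1) = Fn l * (δ + 1) := by
    rw [hFl, hGl]
    have := Nat.choose_mul_succ_eq (β + δ) β
    have hsub : β + δ + 1 - β = δ + 1 := by omega
    rw [hsub] at this
    exact this
  have idl' : Fn l' * (β' + μ' + 1) = Gn l' * (μ' + 1) := by
    rw [hFl', hGl']
    have := Nat.choose_mul_succ_eq (β' + μ') β'
    have hsub : β' + μ' + 1 - β' = μ' + 1 := by omega
    rw [hsub] at this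
    exact this
  have e1 : (∏ x, (Fn x : ℚ)) * ((Gn l : ℚ) * (Gn l' : ℚ))
      = (∏ x, (Gn x : ℚ)) * ((Fn l : ℚ) * (Fn l' : ℚ)) := by exact_mod_cast eq1
  have i1 : (Gn l : ℚ) * ((β : ℚ) + δ + 1) = (Fn l : ℚ) * ((δ : ℚ) + 1) := by exact_mod_cast idl
  have i2 : (Fn l' : ℚ) * ((β' : ℚ) + μ' + 1) = (Gn l' : ℚ) * ((μ' : ℚ) + 1) := by
    exact_mod_cast idl'
  have hPc : ((pot s t : ℕ) : ℚ) = ∏ x, (Fn x : ℚ) := by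
    unfold pot; push_cast; rfl
  have hQc : ((pot s t' : ℕ) : ℚ) = ∏ x, (Gn x : ℚ) := by
    unfold pot; push_cast; rfl
  have E : (∏ x, (Fn x : ℚ)) * (((δ : ℚ) + 1) * ((β' : ℚ) + μ' + 1)) * ((Fn l : ℚ) * (Gn l' : ℚ))
      = (∏ x, (Gn x : ℚ)) * (((β : ℚ) + δ + 1) * ((μ' : ℚ) + 1)) * ((Fn l : ℚ) * (Gn l' : ℚ)) := by
    linear_combination (((β : ℚ) + δ + 1) * ((β' : ℚ) + μ' + 1)) * e1
      - ((∏ x, (Fn x : ℚ)) * (Gn l' : ℚ) * ((β' : ℚ) + μ' + 1)) * i1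
      + ((∏ x, (Gn x : ℚ)) * (Fn l : ℚ) * ((β : ℚ) + δ + 1)) * i2
  have hne0 : ((Fn l : ℚ) * (Gn l' : ℚ)) ≠ 0 := by
    have h1 : 0 < Fn l := by rw [hFl]; exact Nat.choose_pos (by omega)
    have h2 : 0 < Gn l' := by rw [hGl']; exact Nat.choose_pos (by omega)
    positivity
  have key : ((pot s t : ℕ) : ℚ) * (((δ : ℚ) + 1) * ((β' : ℚ) + μ' + 1))
      = ((pot s t' : ℕ) : ℚ) * (((β : ℚ) + δ + 1) * ((μ' : ℚ) + 1)) := by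
    rw [hPc, hQc]
    exact mul_right_cancel₀ hne0 E
  have hle : ((pot s t' : ℕ) : ℚ) ≤ ((pot s t : ℕ) : ℚ) := by exact_mod_cast hmax
  have hposP : (0 : ℚ) < ((pot s t : ℕ) : ℚ) := by exact_mod_cast pot_pos s t
  have hfin : ((δ : ℚ) + 1) * ((β' : ℚ) + μ' + 1) ≤ ((β : ℚ) + δ + 1) * ((μ' : ℚ) + 1) := by
    have step : ((pot s t : ℕ) : ℚ) * (((δ : ℚ) + 1) * ((β' : ℚ) + μ' + 1))
        ≤ ((pot s t : ℕ) : ℚ) * (((β : ℚ) + δ + 1) * ((μ' : ℚ) + 1)) := by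
      rw [key]
      apply mul_le_mul_of_nonneg_right hle
      positivity
    exact le_of_mul_le_mul_left step hposP
  have hmain : (β' : ℚ) * ((δ : ℚ) + 1) ≤ (β : ℚ) * ((μ' : ℚ) + 1) := by nlinarith [hfin]
  have htm' : t' m = l' := Function.update_self m l' t
  unfold millerUtil
  rw [htm', ← hl, hcl, hcl', ← hβ, ← hβ']
  rw [div_le_div_iff₀ (by positivity) (by positivity)]
  push_cast
  linarith [hmain]

end PotentialLemmas

/-- every instance of the Bakers and Millers Game with restricted baker
locations admits a pure Nash equilibrium. -/
theorem exists_pure_nash {L B M : Type*} [Fintype L] [Fintype B] [Fintype M]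
    [DecidableEq L] [DecidableEq B] [DecidableEq M] [Nonempty L]
    (feas : B → Finset L) (hfeas : ∀ b, (feas b).Nonempty) :
    ∃ (s : B → L) (t : M → L), (∀ b, s b ∈ feas b) ∧ isNE feas s t := by
  classical
  obtain ⟨l0⟩ := ‹Nonempty L›
  set Ω : Finset ((B → L) × (M → L)) :=
    Finset.univ.filter (fun p => ∀ b, p.1 b ∈ feas b) with hΩ
  have hne : Ω.Nonempty := by
    refine ⟨⟨fun b => (hfeas b).choose, fun _ => l0⟩, ?_⟩
    rw [hΩ, Finset.mem_filter]
    exact ⟨Finset.mem_univ _, fun b => (hfeas b).choose_spec⟩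
  obtain ⟨p, hp, hmax⟩ := Finset.exists_max_image Ω (fun p => pot p.1 p.2) hne
  obtain ⟨s, t⟩ := p
  have hfeasS : ∀ b, s b ∈ feas b := by
    rw [hΩ, Finset.mem_filter] at hp
    exact hp.2
  refine ⟨s, t, hfeasS, ?_, ?_⟩
  · intro b l' hl'
    by_cases hsame : s b = l'
    · rw [← hsame, Function.update_eq_self]
    · refine baker_le s t b l' hsame ?_
      have hmem : (Function.update s b l', t) ∈ Ω := by
        rw [hΩ, Finset.mem_filter]
        refine ⟨Finset.mem_univ _, fun c => ?_⟩
        show Function.update s b l' c ∈ feas c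
        by_cases hb : c = b
        · subst hb; rw [Function.update_self]; exact hl'
        · rw [Function.update_of_ne hb]; exact hfeasS c
      exact hmax (Function.update s b l', t) hmem
  · intro m l'
    by_cases hsame : t m = l'
    · rw [← hsame, Function.update_eq_self]
    · refine miller_le s t m l' hsame ?_
      have hmem : (s, Function.update t m l') ∈ Ω := by
        rw [hΩ, Finset.mem_filter]
        exact ⟨Finset.mem_univ _, fun c => hfeasS c⟩
      exact hmax (s, Function.update t m l') hmem
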